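/- Fix n ≥ 1 and a ≥ 1, and let P_a be the n×n matrix defined below. Then P_a is cross-symmetric: P_a(i,j) = P_a(n−i+1, n−j+1) for all 1 ≤ i, j ≤ n. -/

import Mathlib

/-- The transition matrix following a single card through a GSR `a`-shuffle of an `n`-card
deck: `P_a(i,j)` (with `1`-based positions `i.val+1`, `j.val+1`) is the chance that the card
at position `i` moves to position `j`. -/
def singleCardMatrix (n a : ℕ) : Matrix (Fin n) (Fin n) ℚ := fun i j =>
  ((∑ k ∈ Finset.Icc 1 a,
      ∑ r ∈ Finset.Icc ((i.val + 1) + (j.val + 1) - (n + 1)) (min i.val j.val),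
        Nat.choose j.val r * Nat.choose (n - (j.val + 1)) (i.val - r) * k ^ r *
          (a - k) ^ (j.val - r) * (k - 1) ^ (i.val - r) *
          (a - k + 1) ^ ((n - (j.val + 1)) - (i.val - r)) : ℕ) : ℚ) / (a : ℚ) ^ n


lemma key (n a i j : ℕ) (hi : i < n) (hj : j < n) :
    (∑ k ∈ Finset.Icc 1 a, ∑ r ∈ Finset.Icc ((i+1)+(j+1)-(n+1)) (min i j),
      Nat.choose j r * Nat.choose (n-(j+1)) (i-r) * k^r * (a-k)^(j-r) * (k-1)^(i-r) *
        (a-k+1)^((n-(j+1))-(i-r)))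
    = (∑ k ∈ Finset.Icc 1 a,
        ∑ r ∈ Finset.Icc (((n-(i+1))+1)+((n-(j+1))+1)-(n+1)) (min (n-(i+1)) (n-(j+1))),
      Nat.choose (n-(j+1)) r * Nat.choose (n-((n-(j+1))+1)) ((n-(i+1))-r) * k^r *
        (a-k)^((n-(j+1))-r) * (k-1)^((n-(i+1))-r) *
        (a-k+1)^((n-((n-(j+1))+1))-((n-(i+1))-r))) := by
  rw [← Finset.sum_product', ← Finset.sum_product']
  apply Finset.sum_nbij' (fun p => (a+1-p.1, (n-(j+1))-(i-p.2)))
    (fun p => (a+1-p.1, j-((n-(i+1))-p.2)))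
  · intro p hp
    simp only [Finset.mem_product, Finset.mem_Icc] at hp ⊢
    omega
  · intro p hp
    simp only [Finset.mem_product, Finset.mem_Icc] at hp ⊢
    omega
  · rintro ⟨k, r⟩ hp
    simp only [Finset.mem_product, Finset.mem_Icc] at hp
    simp only [Prod.mk.injEq]
    omega
  · rintro ⟨k, r⟩ hp
    simp only [Finset.mem_product, Finset.mem_Icc] at hp
    simp only [Prod.mk.injEq]
    omega
  · rintro ⟨k, r⟩ hp
    simp only [Finset.mem_product, Finset.mem_Icc] at hp
    obtain ⟨⟨hk1, hk2⟩, hr1, hr2⟩ := hp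
    have hrj : r ≤ j := le_trans hr2 (min_le_right _ _)
    have hri : r ≤ i := le_trans hr2 (min_le_left _ _)
    have hd : i - r ≤ n - (j+1) := by omega
    have e1 : n - ((n-(j+1))+1) = j := by omega
    have e2 : (n-(i+1)) - ((n-(j+1)) - (i-r)) = j - r := by omega
    have e3 : (n-(j+1)) - ((n-(j+1)) - (i-r)) = i - r := by omega
    have e4 : j - (j - r) = r := by omega
    have b1 : a + 1 - k = a - k + 1 := by omega
    have b2 : a - (a+1-k) = k - 1 := by omega
    have b3 : (a+1-k) - 1 = a - k := by omega
    have b4 : a - (a+1-k) + 1 = k := by omega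
    dsimp only
    rw [e1, e2, e3, e4, b4, b2, b3, b1, Nat.choose_symm hd, Nat.choose_symm hrj]
    ring

/-- The single-card transition matrix is cross-symmetric:
`P_a(i,j) = P_a(n-i+1, n-j+1)`. -/
theorem singleCardMatrix_cross_symmetric (n a : ℕ) (hn : 1 ≤ n) (ha : 1 ≤ a)
    (i j : Fin n) :
    singleCardMatrix n a i j = singleCardMatrix n a i.rev j.rev := by
  simp only [singleCardMatrix, Fin.val_rev]
  congr 1
  exact_mod_cast key n a i.val j.val i.isLt j.isLt
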